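/- For every y ∈ {−1,1}^{ℤ₊} and every i ∈ ℤ₊, the limit w_i(y) := lim_{n→∞} w_i^{(n)}(y) exists; moreover there are constants C > 0 and ϱ ∈ (0,1), independent of y (one may take ϱ = |1−2p| when p ≠ 1/2 and C = (|J|+|K|)/(1−ϱ)), such that |w_i^{(n)}(y) − w_i(y)| ≤ C·ϱ^{n−i} for all n ≥ i. -/

import Mathlib

set_option maxHeartbeats 2000000 in
/-- For every `y ∈ {−1,1}^{ℤ₊}` and every `i ∈ ℤ₊`, the limit
`w_i(y) := lim_{n→∞} w_i^{(n)}(y)` exists; moreover there are constants `C > 0` and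
`ϱ ∈ (0,1)`, independent of `y` (one may take `ϱ = |1−2p|` and `C = (|J|+|K|)/(1−ϱ)`),
such that `|w_i^{(n)}(y) − w_i(y)| ≤ C·ϱ^{n−i}` for all `n ≥ i`. Here `W n i` denotes
`w_i^{(n)}(y)`. -/
theorem stmt_5 (p ε : ℝ) (hp0 : 0 < p) (hp1 : p < 1) (hp2 : p ≠ 1 / 2)
    (hε0 : 0 < ε) (hε1 : ε < 1)
    (J K : ℝ)
    (hJ : J = (1 / 2) * Real.log ((1 - p) / p))
    (hK : K = (1 / 2) * Real.log ((1 - ε) / ε))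
    (A : ℝ → ℝ)
    (hA : ∀ u, A u = (1 / 2) * Real.log (Real.cosh (u + J) / Real.cosh (u - J)))
    (y : ℕ → ℝ) (hy : ∀ i, y i = 1 ∨ y i = -1)
    (W : ℕ → ℕ → ℝ)
    (hW0 : ∀ n i : ℕ, n < i → W n i = 0)
    (hWrec : ∀ n i : ℕ, i ≤ n → W n i = K * y i + A (W n (i + 1))) :
    ∃ wlim : ℕ → ℝ,
      (∀ i : ℕ, Filter.Tendsto (fun n => W n i) Filter.atTop (nhds (wlim i))) ∧
      ∃ C > (0 : ℝ), ∃ ϱ ∈ Set.Ioo (0 : ℝ) 1,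
        ϱ = |1 - 2 * p| ∧ C = (|J| + |K|) / (1 - ϱ) ∧
        ∀ i n : ℕ, i ≤ n → |W n i - wlim i| ≤ C * ϱ ^ (n - i) := by
  -- basic abbreviations
  set ϱ : ℝ := |1 - 2 * p| with hϱdef
  set B : ℝ := |J| + |K| with hBdef
  have hϱ0 : 0 < ϱ := by
    have : 1 - 2 * p ≠ 0 := by
      intro h; apply hp2; linarith
    exact abs_pos.mpr this
  have hϱ1 : ϱ < 1 := by
    rw [hϱdef, abs_lt]; constructor <;> linarith
  have hϱnn : (0:ℝ) ≤ ϱ := le_of_lt hϱ0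
  -- tanh J = 1 - 2p
  have hq0 : (0:ℝ) < (1 - p) / p := div_pos (by linarith) hp0
  have hexp2J : Real.exp (2 * J) = (1 - p) / p := by
    rw [hJ, show 2 * ((1/2) * Real.log ((1 - p)/p)) = Real.log ((1-p)/p) by ring]
    exact Real.exp_log hq0
  have htanh : Real.tanh J = 1 - 2 * p := by
    have ha : (0:ℝ) < Real.exp J := Real.exp_pos J
    have ha2 : Real.exp J * Real.exp J = (1 - p) / p := by
      rw [← Real.exp_add, show J + J = 2 * J by ring]; exact hexp2J
    have hc : (0:ℝ) < Real.cosh J := Real.cosh_pos J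
    have ha3 : Real.exp J * Real.exp J * p = 1 - p := by
      rw [ha2]; field_simp
    rw [Real.tanh_eq_sinh_div_cosh, Real.sinh_eq, Real.cosh_eq, Real.exp_neg]
    rw [div_eq_iff (by positivity)]
    field_simp
    nlinarith [ha3, ha]
  have htanhabs : |Real.tanh J| = ϱ := by rw [htanh]
  -- |sinh x| ≤ cosh x
  have hsc : ∀ x : ℝ, |Real.sinh x| ≤ Real.cosh x := by
    intro x
    rw [abs_le]
    constructor
    · nlinarith [Real.cosh_add_sinh x, Real.exp_pos x]
    · nlinarith [Real.cosh_sub_sinh x, Real.exp_pos (-x)]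
  -- cosh(x + t) ≤ exp |t| * cosh x
  have hgrow : ∀ x t : ℝ, Real.cosh (x + t) ≤ Real.exp |t| * Real.cosh x := by
    intro x t
    have h1 : Real.cosh |t| + Real.sinh |t| = Real.exp |t| := Real.cosh_add_sinh |t|
    have h2 : Real.cosh |t| = Real.cosh t := Real.cosh_abs t
    have h4 : Real.sinh |t| = |Real.sinh t| := (Real.abs_sinh t).symm
    have h3 : Real.sinh x * Real.sinh t ≤ Real.cosh x * |Real.sinh t| := by
      calc Real.sinh x * Real.sinh t ≤ |Real.sinh x * Real.sinh t| := le_abs_self _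
        _ = |Real.sinh x| * |Real.sinh t| := abs_mul _ _
        _ ≤ Real.cosh x * |Real.sinh t| :=
            mul_le_mul_of_nonneg_right (hsc x) (abs_nonneg _)
    rw [Real.cosh_add]
    nlinarith [Real.cosh_pos x]
  -- |A u| ≤ |J|
  have hAbd : ∀ u, |A u| ≤ |J| := by
    intro u
    have hc1 : (0:ℝ) < Real.cosh (u - J) := Real.cosh_pos _
    have hc2 : (0:ℝ) < Real.cosh (u + J) := Real.cosh_pos _
    have e1 : Real.cosh (u + J) ≤ Real.exp (2 * |J|) * Real.cosh (u - J) := by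
      have := hgrow (u - J) (2 * J)
      rw [show u - J + 2 * J = u + J by ring] at this
      rwa [show |2 * J| = 2 * |J| by rw [abs_mul, abs_two]] at this
    have e2 : Real.cosh (u - J) ≤ Real.exp (2 * |J|) * Real.cosh (u + J) := by
      have := hgrow (u + J) (-(2 * J))
      rw [show u + J + -(2 * J) = u - J by ring] at this
      rwa [show |(-(2 * J))| = 2 * |J| by rw [abs_neg, abs_mul, abs_two]] at this
    rw [hA u, abs_le]
    have hr : (0:ℝ) < Real.cosh (u + J) / Real.cosh (u - J) := by positivity
    constructor
    · have hmul : Real.exp (-(2 * |J|)) * Real.cosh (u - J) ≤ Real.cosh (u + J) := by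
        calc Real.exp (-(2*|J|)) * Real.cosh (u - J)
            ≤ Real.exp (-(2*|J|)) * (Real.exp (2 * |J|) * Real.cosh (u + J)) :=
              mul_le_mul_of_nonneg_left e2 (le_of_lt (Real.exp_pos _))
          _ = Real.cosh (u + J) := by
              rw [← mul_assoc, ← Real.exp_add]; simp
      have hlow : Real.exp (-(2 * |J|)) ≤ Real.cosh (u + J) / Real.cosh (u - J) := by
        rw [le_div_iff₀ hc1]; exact hmul
      have h := (Real.le_log_iff_exp_le hr).mpr hlow
      linarith
    · have : Real.cosh (u + J) / Real.cosh (u - J) ≤ Real.exp (2 * |J|) := by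
        rw [div_le_iff₀ hc1]
        linarith [e1]
      have h := (Real.log_le_iff_le_exp hr).mpr this
      linarith
  -- derivative of A
  have hAeq : ∀ u, A u = (1/2 : ℝ) * (Real.log (Real.cosh (u + J)) - Real.log (Real.cosh (u - J))) := by
    intro u
    rw [hA u, Real.log_div (ne_of_gt (Real.cosh_pos _)) (ne_of_gt (Real.cosh_pos _))]
  have hderiv : ∀ u : ℝ, HasDerivAt A ((1/2 : ℝ) * (Real.tanh (u + J) - Real.tanh (u - J))) u := by
    intro u
    have h1 : HasDerivAt (fun x : ℝ => x + J) 1 u := (hasDerivAt_id u).add_const J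
    have h2 : HasDerivAt (fun x : ℝ => x - J) 1 u := (hasDerivAt_id u).sub_const J
    have h3 : HasDerivAt (fun x : ℝ => Real.log (Real.cosh (x + J)))
        (Real.sinh (u + J) / Real.cosh (u + J)) u := by
      have hcosh : HasDerivAt (fun x : ℝ => Real.cosh (x + J)) (Real.sinh (u + J) * 1) u :=
        h1.cosh
      have := (Real.hasDerivAt_log (ne_of_gt (Real.cosh_pos (u + J)))).comp u hcosh
      rw [mul_one, ← div_eq_inv_mul] at this
      exact this
    have h4 : HasDerivAt (fun x : ℝ => Real.log (Real.cosh (x - J)))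
        (Real.sinh (u - J) / Real.cosh (u - J)) u := by
      have hcosh : HasDerivAt (fun x : ℝ => Real.cosh (x - J)) (Real.sinh (u - J) * 1) u :=
        h2.cosh
      have := (Real.hasDerivAt_log (ne_of_gt (Real.cosh_pos (u - J)))).comp u hcosh
      rw [mul_one, ← div_eq_inv_mul] at this
      exact this
    have h5 := ((h3.sub h4).const_mul (1/2 : ℝ))
    have h6 : HasDerivAt (fun x : ℝ => (1/2 : ℝ) * (Real.log (Real.cosh (x + J)) - Real.log (Real.cosh (x - J))))
        ((1/2 : ℝ) * (Real.sinh (u + J) / Real.cosh (u + J) - Real.sinh (u - J) / Real.cosh (u - J))) u := h5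
    rw [Real.tanh_eq_sinh_div_cosh, Real.tanh_eq_sinh_div_cosh]
    have : A = fun x : ℝ => (1/2 : ℝ) * (Real.log (Real.cosh (x + J)) - Real.log (Real.cosh (x - J))) :=
      funext hAeq
    rw [this]
    exact h6
  -- derivative bound
  have hdbound : ∀ u : ℝ, |(1/2 : ℝ) * (Real.tanh (u + J) - Real.tanh (u - J))| ≤ ϱ := by
    intro u
    have hc1 : (0:ℝ) < Real.cosh (u + J) := Real.cosh_pos _
    have hc2 : (0:ℝ) < Real.cosh (u - J) := Real.cosh_pos _
    have hcJ : (0:ℝ) < Real.cosh J := Real.cosh_pos _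
    have hprod : Real.cosh J ^ 2 ≤ Real.cosh (u + J) * Real.cosh (u - J) := by
      rw [Real.cosh_add, Real.cosh_sub]
      nlinarith [Real.sinh_sq u, Real.sinh_sq J, Real.one_le_cosh u, Real.one_le_cosh J]
    have hval : (1/2 : ℝ) * (Real.tanh (u + J) - Real.tanh (u - J)) =
        Real.sinh J * Real.cosh J / (Real.cosh (u + J) * Real.cosh (u - J)) := by
      have hnum : Real.sinh (u + J) * Real.cosh (u - J) - Real.cosh (u + J) * Real.sinh (u - J)
          = 2 * Real.sinh J * Real.cosh J := by
        rw [Real.sinh_add, Real.cosh_sub, Real.cosh_add, Real.sinh_sub]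
        linear_combination (2 * Real.cosh J * Real.sinh J) * Real.cosh_sq_sub_sinh_sq u
      rw [Real.tanh_eq_sinh_div_cosh, Real.tanh_eq_sinh_div_cosh]
      rw [div_sub_div _ _ (ne_of_gt hc1) (ne_of_gt hc2), hnum]
      ring
    rw [hval, ← htanhabs, Real.tanh_eq_sinh_div_cosh]
    rw [abs_div, abs_mul, abs_of_pos hcJ, abs_div, abs_of_pos hcJ,
      abs_of_pos (mul_pos hc1 hc2)]
    rw [div_le_div_iff₀ (mul_pos hc1 hc2) hcJ]
    nlinarith [abs_nonneg (Real.sinh J), hprod]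
  -- Lipschitz property of A
  have hLip : ∀ u v : ℝ, |A u - A v| ≤ ϱ * |u - v| := by
    intro u v
    have := Convex.norm_image_sub_le_of_norm_hasDerivWithin_le
      (f := A) (f' := fun u => (1/2 : ℝ) * (Real.tanh (u + J) - Real.tanh (u - J)))
      (s := Set.univ) (C := ϱ)
      (fun x _ => (hderiv x).hasDerivWithinAt)
      (fun x _ => by simpa only [Real.norm_eq_abs] using hdbound x)
      convex_univ (Set.mem_univ v) (Set.mem_univ u)
    simpa [Real.norm_eq_abs] using this
  -- uniform bound on W
  have hBnn : (0:ℝ) ≤ B := by positivity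
  have hWbd : ∀ n i, |W n i| ≤ B := by
    intro n i
    rcases lt_or_ge n i with h | h
    · rw [hW0 n i h]; simpa using hBnn
    · rw [hWrec n i h]
      have hyi : |y i| = 1 := by rcases hy i with h' | h' <;> simp [h']
      calc |K * y i + A (W n (i+1))| ≤ |K * y i| + |A (W n (i+1))| := abs_add_le _ _
        _ = |K| + |A (W n (i+1))| := by rw [abs_mul, hyi, mul_one]
        _ ≤ |K| + |J| := by linarith [hAbd (W n (i+1))]
        _ = B := by rw [hBdef]; ring
  -- key contraction estimate
  have haux : ∀ n m : ℕ, n ≤ m → ∀ k i : ℕ, i + k = n + 1 →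
      |W n i - W m i| ≤ B * ϱ ^ k := by
    intro n m hnm k
    induction k with
    | zero =>
      intro i hi
      have hi' : i = n + 1 := by omega
      subst hi'
      rw [hW0 n (n+1) (by omega), zero_sub, abs_neg, pow_zero, mul_one]
      exact hWbd m (n+1)
    | succ k ih =>
      intro i hi
      have hin : i ≤ n := by omega
      have him : i ≤ m := le_trans hin hnm
      rw [hWrec n i hin, hWrec m i him,
        show K * y i + A (W n (i+1)) - (K * y i + A (W m (i+1)))
          = A (W n (i+1)) - A (W m (i+1)) by ring]
      calc |A (W n (i+1)) - A (W m (i+1))| ≤ ϱ * |W n (i+1) - W m (i+1)| := hLip _ _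
        _ ≤ ϱ * (B * ϱ ^ k) := mul_le_mul_of_nonneg_left (ih (i+1) (by omega)) hϱnn
        _ = B * ϱ ^ (k+1) := by ring
  -- Cauchy sequences
  have hex : ∀ i : ℕ, ∃ l : ℝ, Filter.Tendsto (fun n => W n i) Filter.atTop (nhds l) := by
    intro i
    apply cauchySeq_tendsto_of_complete
    apply cauchySeq_of_le_geometric ϱ (B / ϱ ^ i) hϱ1
    intro n
    rw [Real.dist_eq]
    rcases le_or_gt i (n + 1) with h | h
    · have h2 : |W n i - W (n+1) i| ≤ B * ϱ ^ (n + 1 - i) :=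
        haux n (n+1) (Nat.le_succ n) (n + 1 - i) i (by omega)
      refine h2.trans ?_
      rw [div_mul_eq_mul_div, le_div_iff₀ (pow_pos hϱ0 i)]
      have hpow : ϱ ^ (n + 1 - i) * ϱ ^ i = ϱ ^ (n + 1) := by
        rw [← pow_add]; congr 1; omega
      have hle : ϱ ^ (n + 1) ≤ ϱ ^ n := pow_le_pow_of_le_one hϱnn (le_of_lt hϱ1) (by omega)
      calc B * ϱ ^ (n + 1 - i) * ϱ ^ i = B * ϱ ^ (n + 1) := by rw [mul_assoc, hpow]
        _ ≤ B * ϱ ^ n := mul_le_mul_of_nonneg_left hle hBnn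
    · rw [hW0 n i (by omega), hW0 (n+1) i (by omega), sub_zero, abs_zero]
      positivity
  choose wlim hw using hex
  refine ⟨wlim, hw, B / (1 - ϱ), ?_, ϱ, ⟨hϱ0, hϱ1⟩, rfl, rfl, ?_⟩
  · -- C > 0, need B > 0, i.e. |J| > 0
    have hJne : J ≠ 0 := by
      intro h
      rw [hJ] at h
      have : Real.log ((1 - p)/p) = 0 := by linarith
      rcases Real.log_eq_zero.mp this with h' | h' | h'
      · linarith
      · have : p = 1/2 := by
          field_simp at h'
          linarith
        exact hp2 this
      · linarith
    have : 0 < |J| := abs_pos.mpr hJne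
    have hB0 : 0 < B := by
      have : (0:ℝ) ≤ |K| := abs_nonneg _
      rw [hBdef]; linarith
    exact div_pos hB0 (by linarith)
  · intro i n hin
    have htend : Filter.Tendsto (fun m => |W n i - W m i|) Filter.atTop
        (nhds |W n i - wlim i|) := (Filter.Tendsto.sub tendsto_const_nhds (hw i)).abs
    apply le_of_tendsto htend
    filter_upwards [Filter.eventually_ge_atTop n] with m hm
    have h1 : |W n i - W m i| ≤ B * ϱ ^ (n + 1 - i) :=
      haux n m hm (n + 1 - i) i (by omega)
    refine h1.trans ?_
    have hk : n + 1 - i = (n - i) + 1 := by omega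
    rw [hk, pow_succ]
    have hBC : B ≤ B / (1 - ϱ) := by
      rw [le_div_iff₀ (by linarith : (0:ℝ) < 1 - ϱ)]
      nlinarith
    have h2 : B * (ϱ ^ (n - i) * ϱ) ≤ B * ϱ ^ (n - i) := by
      have : ϱ ^ (n - i) * ϱ ≤ ϱ ^ (n - i) * 1 :=
        mul_le_mul_of_nonneg_left (le_of_lt hϱ1) (pow_nonneg hϱnn _)
      nlinarith [pow_nonneg hϱnn (n - i)]
    calc B * (ϱ ^ (n - i) * ϱ) ≤ B * ϱ ^ (n - i) := h2
      _ ≤ B / (1 - ϱ) * ϱ ^ (n - i) :=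
        mul_le_mul_of_nonneg_right hBC (pow_nonneg hϱnn _)
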